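/- arXiv:1709.03979 — 2 statements merged into one kernel-verified Lean document; each statement's English description precedes it below -/
import Mathlib

section
/- Let Y = UΣVᵀ be a singular value decomposition of Y ∈ ℝ^{d×m} with singular values σ₁,…,σ_r and let τ ≥ 0. Define the singular value shrinkage operator D_τ(Y) = U·diag(max(σᵢ − τ, 0))·Vᵀ. Then D_τ(Y) is the unique minimizer of X ↦ (1/2)‖Y − X‖_F² + τ‖X‖_* over all matrices X ∈ ℝ^{d×m}, where ‖X‖_* denotes the nuclear norm (sum of singular values). -/
open Matrix Finset

/-- Nuclear norm: trace of the positive semidefinite square root of `XᵀX`. -/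
noncomputable def nuclearNorm {d m : ℕ} (X : Matrix (Fin d) (Fin m) ℝ) : ℝ :=
  (((Matrix.posSemidef_conjTranspose_mul_self X).1.eigenvectorUnitary : Matrix (Fin m) (Fin m) ℝ) *
    diagonal ((fun x : ℝ => (x : ℝ)) ∘ (√·) ∘ (Matrix.posSemidef_conjTranspose_mul_self X).1.eigenvalues) *
    (star (Matrix.posSemidef_conjTranspose_mul_self X).1.eigenvectorUnitary :
      Matrix (Fin m) (Fin m) ℝ)).trace

section Aux

lemma nuclearNorm_eq_cfc {d m : ℕ} (X : Matrix (Fin d) (Fin m) ℝ) :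
    nuclearNorm X = ((Matrix.posSemidef_conjTranspose_mul_self X).1.cfc Real.sqrt).trace := by
  rw [nuclearNorm, Matrix.IsHermitian.cfc]
  simp [RCLike.ofReal_real_eq_id, Function.comp_def]

lemma cfc_sqrt_eq_of_sq_eq {n : ℕ} {B A : Matrix (Fin n) (Fin n) ℝ} (hB : B.PosSemidef)
    (hA : A.IsHermitian) (h : B ^ 2 = A) : hA.cfc Real.sqrt = B := by
  rw [← hA.cfc_eq, ← h, ← cfc_comp_pow Real.sqrt 2 B (hf := Real.continuous_sqrt.continuousOn)
    (ha := hB.1.isSelfAdjoint)]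
  have hspec := (Matrix.posSemidef_iff_isHermitian_and_spectrum_nonneg.mp hB).2
  rw [cfc_congr (g := id) (fun x hx => by
    simp [Real.sqrt_sq (show (0:ℝ) ≤ x from hspec hx)])]
  exact cfc_id ℝ B hB.1.isSelfAdjoint

/-- trace of `diagonal g * M`. -/
lemma trace_diagonal_mul' {n : ℕ} (g : Fin n → ℝ) (M : Matrix (Fin n) (Fin n) ℝ) :
    (Matrix.diagonal g * M).trace = ∑ i, g i * M i i := by
  simp [Matrix.trace, Matrix.diag, Matrix.diagonal_mul]

lemma posSemidef_diag_nonneg {n : ℕ} {M : Matrix (Fin n) (Fin n) ℝ}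
    (h : M.PosSemidef) (j : Fin n) : 0 ≤ M j j := by
  exact h.diag_nonneg

/-- `(L * diagonal c * Mᵀ) * (M' * diagonal e * Rᵀ)` collapses when `Mᵀ * M' = 1`. -/
lemma sandwich {a b d k : ℕ} (L : Matrix (Fin a) (Fin k) ℝ) (M M' : Matrix (Fin b) (Fin k) ℝ)
    (R : Matrix (Fin d) (Fin k) ℝ) (c e : Fin k → ℝ) (h : Mᵀ * M' = 1) :
    (L * Matrix.diagonal c * Mᵀ) * (M' * Matrix.diagonal e * Rᵀ) =
      L * Matrix.diagonal (fun i => c i * e i) * Rᵀ := by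
  simp only [Matrix.mul_assoc]
  rw [← Matrix.mul_assoc Mᵀ M', h, Matrix.one_mul,
    ← Matrix.mul_assoc (Matrix.diagonal c) (Matrix.diagonal e),
    Matrix.diagonal_mul_diagonal]

lemma transpose_udv {a b k : ℕ} (L : Matrix (Fin a) (Fin k) ℝ) (R : Matrix (Fin b) (Fin k) ℝ)
    (c : Fin k → ℝ) :
    (L * Matrix.diagonal c * Rᵀ)ᵀ = R * Matrix.diagonal c * Lᵀ := by
  rw [Matrix.transpose_mul, Matrix.transpose_mul, Matrix.transpose_transpose,
    Matrix.diagonal_transpose, Matrix.mul_assoc]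

lemma trace_udv_mul {a b k : ℕ} (Uu : Matrix (Fin a) (Fin k) ℝ) (Vv : Matrix (Fin b) (Fin k) ℝ)
    (c : Fin k → ℝ) (X : Matrix (Fin a) (Fin b) ℝ) :
    ((Uu * Matrix.diagonal c * Vvᵀ)ᵀ * X).trace = ∑ i, c i * (Uuᵀ * X * Vv) i i := by
  rw [transpose_udv]
  have h1 : Vv * Matrix.diagonal c * Uuᵀ * X = Vv * (Matrix.diagonal c * (Uuᵀ * X)) := by
    simp only [Matrix.mul_assoc]
  rw [h1, Matrix.trace_mul_comm, Matrix.mul_assoc, trace_diagonal_mul']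

/-- `nuclearNorm (U * diagonal c * Vᵀ) = ∑ c` for matrices with orthonormal columns. -/
lemma nuclearNorm_eq_sum {p q r : ℕ} (U : Matrix (Fin p) (Fin r) ℝ)
    (V : Matrix (Fin q) (Fin r) ℝ) (hU : Uᵀ * U = 1) (hV : Vᵀ * V = 1)
    (c : Fin r → ℝ) (hc : ∀ i, 0 ≤ c i) :
    nuclearNorm (U * Matrix.diagonal c * Vᵀ) = ∑ i, c i := by
  set X : Matrix (Fin p) (Fin q) ℝ := U * Matrix.diagonal c * Vᵀ with hX
  have hBpsd : (V * Matrix.diagonal c * Vᵀ).PosSemidef := by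
    have h1 : (Matrix.diagonal c).PosSemidef := Matrix.PosSemidef.diagonal hc
    simpa using h1.mul_mul_conjTranspose_same V
  have hsq : (V * Matrix.diagonal c * Vᵀ) ^ 2 = Xᴴ * X := by
    show _ = Xᵀ * X
    rw [pow_two, sandwich V V V V c c hV, hX, transpose_udv, sandwich V U U V c c hU]
  have heq := (cfc_sqrt_eq_of_sq_eq hBpsd (Matrix.posSemidef_conjTranspose_mul_self X).1 hsq).symm
  rw [nuclearNorm_eq_cfc, ← heq, Matrix.trace_mul_cycle, hV, Matrix.one_mul,
    Matrix.trace_diagonal]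

/-- Duality: `trace (Wᵀ * X) ≤ nuclearNorm X` when `WᵀW ≼ 1`. -/
lemma trace_mul_le_nuclearNorm {p q : ℕ} (X W : Matrix (Fin p) (Fin q) ℝ)
    (hW : (1 - Wᵀ * W).PosSemidef) : (Wᵀ * X).trace ≤ nuclearNorm X := by
  have hXX := Matrix.posSemidef_conjTranspose_mul_self X
  have hH : (Xᵀ * X).IsHermitian := hXX.1
  set Q : Matrix (Fin q) (Fin q) ℝ :=
    (Matrix.IsHermitian.eigenvectorUnitary hH : Matrix (Fin q) (Fin q) ℝ) with hQdef
  set lam : Fin q → ℝ := hH.eigenvalues with hlamdef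
  have hlam : ∀ j, 0 ≤ lam j := fun j => hXX.eigenvalues_nonneg j
  have hQ1 : Qᵀ * Q = 1 :=
    Matrix.mem_unitaryGroup_iff'.mp (Matrix.IsHermitian.eigenvectorUnitary hH).2
  have hQ2 : Q * Qᵀ = 1 :=
    Matrix.mem_unitaryGroup_iff.mp (Matrix.IsHermitian.eigenvectorUnitary hH).2
  have hspec : Xᵀ * X = Q * Matrix.diagonal lam * Qᵀ := by
    have := hH.spectral_theorem
    rw [this]; simp [RCLike.ofReal_real_eq_id, hQdef, hlamdef, Matrix.star_eq_conjTranspose]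
  -- nuclearNorm X = ∑ √λ
  have hS : nuclearNorm X = ∑ j, Real.sqrt (lam j) := by
    have hSpsd : (Q * Matrix.diagonal (fun j => Real.sqrt (lam j)) * Qᵀ).PosSemidef := by
      have h1 : (Matrix.diagonal (fun j => Real.sqrt (lam j))).PosSemidef :=
        Matrix.PosSemidef.diagonal (fun j => Real.sqrt_nonneg _)
      simpa using h1.mul_mul_conjTranspose_same Q
    have hsq : (Q * Matrix.diagonal (fun j => Real.sqrt (lam j)) * Qᵀ) ^ 2 = Xᴴ * X := by
      show _ = Xᵀ * X
      rw [pow_two, sandwich Q Q Q Q _ _ hQ1, hspec]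
      congr 2
      exact congrArg Matrix.diagonal (funext fun j => Real.mul_self_sqrt (hlam j))
    have heq := (cfc_sqrt_eq_of_sq_eq hSpsd (Matrix.posSemidef_conjTranspose_mul_self X).1 hsq).symm
    rw [nuclearNorm_eq_cfc, ← heq, Matrix.trace_mul_cycle, hQ1, Matrix.one_mul,
      Matrix.trace_diagonal]
  -- column norms of X*Q
  have hBcol : ∀ j, (∑ i, (X * Q) i j ^ 2) = lam j := by
    intro j
    have h1 : (X * Q)ᵀ * (X * Q) = Matrix.diagonal lam := by
      calc (X * Q)ᵀ * (X * Q) = Qᵀ * ((Xᵀ * X) * Q) := by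
            rw [Matrix.transpose_mul]; simp only [Matrix.mul_assoc]
        _ = Qᵀ * (Q * Matrix.diagonal lam * Qᵀ * Q) := by rw [hspec]
        _ = (Qᵀ * Q) * Matrix.diagonal lam * (Qᵀ * Q) := by simp only [Matrix.mul_assoc]
        _ = Matrix.diagonal lam := by rw [hQ1]; simp
    have h2 := congrArg (fun M => M j j) h1
    simpa [Matrix.mul_apply, pow_two, mul_comm] using h2
  -- column norms of W*Q
  have hAcol : ∀ j, (∑ i, (W * Q) i j ^ 2) ≤ 1 := by
    intro j
    have hpsd := hW.conjTranspose_mul_mul_same Q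
    have hd := posSemidef_diag_nonneg hpsd j
    have h1 : (Qᴴ * (1 - Wᵀ * W) * Q) = 1 - (W * Q)ᵀ * (W * Q) := by
      show Qᵀ * (1 - Wᵀ * W) * Q = _
      rw [Matrix.mul_sub, Matrix.mul_one, Matrix.sub_mul, hQ1, Matrix.transpose_mul]
      congr 1
      simp only [Matrix.mul_assoc]
    rw [h1] at hd
    have h2 : ((W * Q)ᵀ * (W * Q)) j j = ∑ i, (W * Q) i j ^ 2 := by
      simp [Matrix.mul_apply, pow_two, mul_comm]
    have h3 : (1 : Matrix (Fin q) (Fin q) ℝ) j j = 1 := by simp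
    simp only [Matrix.sub_apply, h2, h3] at hd
    linarith
  -- trace (Wᵀ X) = ∑ j ∑ i (W*Q) i j * (X*Q) i j
  have htr : (Wᵀ * X).trace = ∑ j, ∑ i, (W * Q) i j * (X * Q) i j := by
    have h0 : Wᵀ * X = Wᵀ * X * (Q * Qᵀ) := by rw [hQ2, Matrix.mul_one]
    have h1 : Wᵀ * X * (Q * Qᵀ) = (Wᵀ * (X * Q)) * Qᵀ := by simp only [Matrix.mul_assoc]
    have h2 : (W * Q)ᵀ * (X * Q) = Qᵀ * (Wᵀ * (X * Q)) := by
      rw [Matrix.transpose_mul]; simp only [Matrix.mul_assoc]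
    rw [h0, h1, Matrix.trace_mul_comm, ← h2]
    simp [Matrix.trace, Matrix.diag, Matrix.mul_apply, mul_comm]
  rw [htr, hS]
  apply Finset.sum_le_sum
  intro j _
  have hcs := Finset.sum_mul_sq_le_sq_mul_sq Finset.univ
    (fun i => (W * Q) i j) (fun i => (X * Q) i j)
  have habs : (∑ i, (W * Q) i j * (X * Q) i j) ≤
      Real.sqrt ((∑ i, (W * Q) i j ^ 2) * ∑ i, (X * Q) i j ^ 2) := by
    calc (∑ i, (W * Q) i j * (X * Q) i j)
        ≤ |∑ i, (W * Q) i j * (X * Q) i j| := le_abs_self _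
      _ = Real.sqrt ((∑ i, (W * Q) i j * (X * Q) i j) ^ 2) :=
          (Real.sqrt_sq_eq_abs _).symm
      _ ≤ Real.sqrt ((∑ i, (W * Q) i j ^ 2) * ∑ i, (X * Q) i j ^ 2) :=
          Real.sqrt_le_sqrt hcs
  refine habs.trans ?_
  rw [Real.sqrt_mul (Finset.sum_nonneg (fun i _ => sq_nonneg _)), hBcol j]
  have h4 : Real.sqrt (∑ i, (W * Q) i j ^ 2) ≤ 1 := by
    rw [show (1 : ℝ) = Real.sqrt 1 by simp]
    exact Real.sqrt_le_sqrt (hAcol j)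
  nlinarith [Real.sqrt_nonneg (lam j), Real.sqrt_nonneg (∑ i, (W * Q) i j ^ 2)]

end Aux

theorem singular_value_thresholding (d m r : ℕ)
    (Y : Matrix (Fin d) (Fin m) ℝ)
    (U : Matrix (Fin d) (Fin r) ℝ) (V : Matrix (Fin m) (Fin r) ℝ)
    (hU : Uᵀ * U = 1) (hV : Vᵀ * V = 1)
    (σ : Fin r → ℝ) (hσ : ∀ i, 0 ≤ σ i)
    (hY : Y = U * Matrix.diagonal σ * Vᵀ)
    (τ : ℝ) (hτ : 0 ≤ τ)
    (Dτ : Matrix (Fin d) (Fin m) ℝ)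
    (hDτ : Dτ = U * Matrix.diagonal (fun i => max (σ i - τ) 0) * Vᵀ) :
    ∀ X : Matrix (Fin d) (Fin m) ℝ, X ≠ Dτ →
      (1/2) * ((Y - Dτ)ᵀ * (Y - Dτ)).trace + τ * nuclearNorm Dτ <
      (1/2) * ((Y - X)ᵀ * (Y - X)).trace + τ * nuclearNorm X := by
  intro X hX
  set a : Fin r → ℝ := fun i => max (σ i - τ) 0 with ha
  set g : Fin r → ℝ := fun i => min (σ i) τ with hg
  have hg0 : ∀ i, 0 ≤ g i := fun i => le_min (hσ i) hτ
  have hgτ : ∀ i, g i ≤ τ := fun i => min_le_right _ _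
  set G : Matrix (Fin d) (Fin m) ℝ := Y - Dτ with hGdef
  have hG : G = U * Matrix.diagonal g * Vᵀ := by
    rw [hGdef, hY, hDτ, ← Matrix.sub_mul, ← Matrix.mul_sub, Matrix.diagonal_sub]
    congr 2
    apply congrArg Matrix.diagonal
    funext i
    show σ i - a i = g i
    rcases le_total (σ i) τ with h | h
    · simp [hg, ha, min_eq_left h, max_eq_right (by linarith : σ i - τ ≤ 0)]
    · simp [hg, ha, min_eq_right h, max_eq_left (by linarith : (0:ℝ) ≤ σ i - τ)]
  -- nuclear norm of Dτ
  have hND : nuclearNorm Dτ = ∑ i, a i := by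
    rw [hDτ]; exact nuclearNorm_eq_sum U V hU hV a (fun i => le_max_right _ _)
  -- ⟨G, Dτ⟩ = τ ∑ a
  have hGD : (Gᵀ * Dτ).trace = τ * ∑ i, a i := by
    have h1 : Gᵀ * Dτ = V * Matrix.diagonal (fun i => g i * a i) * Vᵀ := by
      rw [hG, hDτ, transpose_udv, sandwich V U U V g a hU]
    rw [h1, Matrix.trace_mul_cycle, hV, Matrix.one_mul, Matrix.trace_diagonal,
      Finset.mul_sum]
    apply Finset.sum_congr rfl
    intro i _
    rcases le_total (σ i) τ with h | h
    · simp [hg, ha, min_eq_left h, max_eq_right (by linarith : σ i - τ ≤ 0)]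
    · simp [hg, ha, min_eq_right h, max_eq_left (by linarith : (0:ℝ) ≤ σ i - τ)]
  -- ⟨G, X⟩ ≤ τ · nuclearNorm X
  have hGX : (Gᵀ * X).trace ≤ τ * nuclearNorm X := by
    set t : Fin r → ℝ := fun i => (Uᵀ * X * V) i i with ht
    set ε : Fin r → ℝ := fun i => if 0 ≤ t i then 1 else -1 with hε
    have hε2 : ∀ i, ε i * ε i = 1 := by
      intro i; by_cases h : 0 ≤ t i <;> simp [hε, h]
    set W : Matrix (Fin d) (Fin m) ℝ := U * Matrix.diagonal ε * Vᵀ with hWdef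
    have htrG : (Gᵀ * X).trace = ∑ i, g i * t i := by
      rw [hG, trace_udv_mul]
    have htrW : (Wᵀ * X).trace = ∑ i, ε i * t i := by
      rw [hWdef, trace_udv_mul]
    -- 1 - WᵀW is PSD
    have hWpsd : (1 - Wᵀ * W).PosSemidef := by
      have hWW : Wᵀ * W = V * Vᵀ := by
        rw [hWdef, transpose_udv, sandwich V U U V ε ε hU,
          show Matrix.diagonal (fun i => ε i * ε i) = (1 : Matrix (Fin r) (Fin r) ℝ) by
            rw [← Matrix.diagonal_one]; exact congrArg Matrix.diagonal (funext hε2),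
          Matrix.mul_one]
      rw [hWW]
      have hidem : (1 - V * Vᵀ)ᴴ * (1 - V * Vᵀ) = 1 - V * Vᵀ := by
        show (1 - V * Vᵀ)ᵀ * (1 - V * Vᵀ) = 1 - V * Vᵀ
        have hsym : (1 - V * Vᵀ)ᵀ = 1 - V * Vᵀ := by
          rw [Matrix.transpose_sub, Matrix.transpose_one, Matrix.transpose_mul,
            Matrix.transpose_transpose]
        have hPP : V * Vᵀ * (V * Vᵀ) = V * Vᵀ := by
          rw [Matrix.mul_assoc, ← Matrix.mul_assoc Vᵀ V Vᵀ, hV, Matrix.one_mul]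
        rw [hsym, Matrix.mul_sub, Matrix.mul_one, Matrix.sub_mul, Matrix.one_mul, hPP]
        abel
      have := Matrix.posSemidef_conjTranspose_mul_self (1 - V * Vᵀ)
      rwa [hidem] at this
    have hdual := trace_mul_le_nuclearNorm X W hWpsd
    rw [htrW] at hdual
    rw [htrG]
    have hstep : ∑ i, g i * t i ≤ τ * ∑ i, ε i * t i := by
      rw [Finset.mul_sum]
      apply Finset.sum_le_sum
      intro i _
      by_cases h : 0 ≤ t i
      · simp only [hε, if_pos h]
        have := hgτ i
        nlinarith
      · simp only [hε, if_neg h]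
        push_neg at h
        have := hg0 i
        nlinarith
    calc ∑ i, g i * t i ≤ τ * ∑ i, ε i * t i := hstep
      _ ≤ τ * nuclearNorm X := mul_le_mul_of_nonneg_left hdual hτ
  -- expansion of the quadratic term
  set E : Matrix (Fin d) (Fin m) ℝ := Dτ - X with hEdef
  have hYX : Y - X = G + E := by rw [hGdef, hEdef]; abel
  have hexp : ((Y - X)ᵀ * (Y - X)).trace
      = (Gᵀ * G).trace + 2 * (Gᵀ * E).trace + (Eᵀ * E).trace := by
    have hEG : (Eᵀ * G).trace = (Gᵀ * E).trace := by
      rw [← Matrix.trace_transpose (Eᵀ * G), Matrix.transpose_mul,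
        Matrix.transpose_transpose]
    rw [hYX, Matrix.transpose_add, Matrix.add_mul, Matrix.mul_add, Matrix.mul_add,
      Matrix.trace_add, Matrix.trace_add, Matrix.trace_add, hEG]
    ring
  have hGE : (Gᵀ * E).trace = (Gᵀ * Dτ).trace - (Gᵀ * X).trace := by
    rw [hEdef, Matrix.mul_sub, Matrix.trace_sub]
  -- trace(EᵀE) > 0
  have hEne : E ≠ 0 := sub_ne_zero.mpr (Ne.symm hX)
  have hEE : 0 < (Eᵀ * E).trace := by
    have hform : (Eᵀ * E).trace = ∑ j, ∑ i, (E i j) ^ 2 := by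
      simp [Matrix.trace, Matrix.diag, Matrix.mul_apply, pow_two]
    rw [hform]
    obtain ⟨i0, j0, hij⟩ : ∃ i j, E i j ≠ 0 := by
      by_contra h
      push_neg at h
      exact hEne (Matrix.ext fun i j => h i j)
    have hpos : 0 < ∑ i, (E i j0) ^ 2 :=
      Finset.sum_pos' (fun i _ => sq_nonneg _)
        ⟨i0, Finset.mem_univ _, by positivity⟩
    exact Finset.sum_pos' (fun j _ => Finset.sum_nonneg fun i _ => sq_nonneg _)
      ⟨j0, Finset.mem_univ _, hpos⟩
  -- put everything together
  have key : τ * nuclearNorm Dτ = (Gᵀ * Dτ).trace := by rw [hGD, hND]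
  rw [hexp]
  have h1 : (Gᵀ * E).trace = τ * nuclearNorm Dτ - (Gᵀ * X).trace := by
    rw [hGE, key]
  linarith [hGX, hEE, h1]
end

section
/- Let 0 < p < 1 and w > 0. Consider h(x) = (1/2)(x − γ)² + w·x^p on x ∈ [0, ∞) for γ > 0, and define the threshold τ_p(w) = (2w(1−p))^{1/(2−p)} + w·p·(2w(1−p))^{(p−1)/(2−p)}. If γ < τ_p(w), then x = 0 is the unique global minimizer of h. If γ > τ_p(w), there exists a nonzero x* > 0 with h(x*) < h(0), satisfying the stationarity condition x* − γ + w·p·(x*)^{p−1} = 0. -/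
set_option maxHeartbeats 1000000

noncomputable def gstThreshold (p w : ℝ) : ℝ :=
  (2*w*(1-p)) ^ ((1:ℝ)/(2-p)) + w * p * (2*w*(1-p)) ^ ((p-1)/(2-p))

theorem gst_threshold_characterization (p w γ : ℝ)
    (hp : 0 < p) (hp1 : p < 1) (hw : 0 < w) (hγ : 0 < γ)
    (h : ℝ → ℝ) (hh : ∀ x, h x = (1/2) * (x - γ)^2 + w * x ^ p) :
    (γ < gstThreshold p w → ∀ x : ℝ, 0 < x → h 0 < h x) ∧
    (gstThreshold p w < γ →
      ∃ x : ℝ, 0 < x ∧ h x < h 0 ∧ x - γ + w * p * x ^ (p - 1) = 0) := by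
  have hp2 : (0:ℝ) < 2 - p := by linarith
  have h1p : (0:ℝ) < 1 - p := by linarith
  have hc : (0:ℝ) < 2*w*(1-p) := by nlinarith
  set a : ℝ := (2*w*(1-p)) ^ ((1:ℝ)/(2-p)) with ha_def
  have ha : 0 < a := Real.rpow_pos_of_pos hc _
  have hap2 : a ^ (2-p) = 2*w*(1-p) := by
    rw [ha_def, ← Real.rpow_mul hc.le, one_div, inv_mul_cancel₀ hp2.ne', Real.rpow_one]
  have hapm : a ^ (p-1) = (2*w*(1-p)) ^ ((p-1)/(2-p)) := by
    rw [ha_def, ← Real.rpow_mul hc.le]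
    congr 1
    field_simp
  have hapos : (0:ℝ) < a ^ (p-1) := Real.rpow_pos_of_pos ha _
  have haw : w * a ^ (p-1) = a / (2*(1-p)) := by
    have h1 : a ^ (2-p) * a ^ (p-1) = a := by
      rw [← Real.rpow_add ha]; norm_num
    rw [hap2] at h1
    field_simp
    nlinarith [h1]
  have hτ : gstThreshold p w = a + w * p * a ^ (p-1) := by
    rw [gstThreshold, ← hapm, ← ha_def]
  set τ := gstThreshold p w with hτdef
  have hτa : τ = a * (2-p) / (2*(1-p)) := by
    rw [hτ]
    have hx : w * p * a^(p-1) = p * (w * a^(p-1)) := by ring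
    rw [hx, haw]
    field_simp
    ring
  have hτ0 : 0 < τ := by rw [hτa]; positivity
  -- key inequality: τ ≤ x/2 + w x^(p-1) for x > 0
  have key : ∀ x : ℝ, 0 < x → τ ≤ x/2 + w * x^(p-1) := by
    intro x hx
    set lam := (1-p)/(2-p) with hlam
    set mu := (1:ℝ)/(2-p) with hmu
    have hlam0 : 0 < lam := div_pos h1p hp2
    have hmu0 : 0 < mu := by positivity
    have hsum : lam + mu = 1 := by rw [hlam, hmu]; field_simp; ring
    have hq1 : x/(2*lam) = τ * (x/a) := by
      rw [hτa, hlam]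
      field_simp
    have hq2 : w * x^(p-1) / mu = τ * (x/a)^(p-1) := by
      have hd : (x/a)^(p-1) = x^(p-1) / a^(p-1) := Real.div_rpow hx.le ha.le _
      have hτw : τ = w * a^(p-1) / mu := by
        rw [hτa, haw, hmu]; field_simp
      rw [hd, hτw]
      field_simp
    have hxa : 0 < x / a := div_pos hx ha
    have hgm := Real.geom_mean_le_arith_mean2_weighted hlam0.le hmu0.le
      (le_of_lt (by rw [hq1]; positivity : (0:ℝ) < x/(2*lam)))
      (le_of_lt (by rw [hq2]; positivity : (0:ℝ) < w * x^(p-1)/mu)) hsum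
    rw [hq1, hq2] at hgm
    have hlhs : (τ * (x/a)) ^ lam * (τ * (x/a)^(p-1)) ^ mu = τ := by
      rw [Real.mul_rpow hτ0.le hxa.le, Real.mul_rpow hτ0.le (by positivity),
        ← Real.rpow_mul hxa.le]
      have e1 : (x/a)^lam * (x/a)^((p-1)*mu) = (x/a)^(lam + (p-1)*mu) :=
        (Real.rpow_add hxa _ _).symm
      have e2 : lam + (p-1)*mu = 0 := by rw [hlam, hmu]; field_simp; ring
      have e3 : τ ^ lam * τ ^ mu = τ := by
        rw [← Real.rpow_add hτ0, hsum, Real.rpow_one]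
      calc τ ^ lam * (x/a) ^ lam * (τ ^ mu * (x/a) ^ ((p-1)*mu))
          = (τ ^ lam * τ ^ mu) * ((x/a)^lam * (x/a)^((p-1)*mu)) := by ring
        _ = τ * (x/a)^(0:ℝ) := by rw [e3, e1, e2]
        _ = τ := by rw [Real.rpow_zero, mul_one]
    rw [hlhs] at hgm
    have hrhs : lam * (τ * (x/a)) + mu * (τ * (x/a)^(p-1)) = x/2 + w * x^(p-1) := by
      rw [← hq1, ← hq2]
      field_simp
    linarith [hrhs ▸ hgm]
  have h0p : (0:ℝ) ^ p = 0 := Real.zero_rpow hp.ne'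
  constructor
  · intro hγτ x hx
    have hxp : x ^ p = x^(p-1) * x := by
      calc x ^ p = x ^ (p-1+1) := by norm_num
        _ = x^(p-1) * x^(1:ℝ) := Real.rpow_add hx _ _
        _ = x^(p-1) * x := by rw [Real.rpow_one]
    have hk := key x hx
    have := mul_lt_mul_of_pos_left (lt_of_lt_of_le hγτ hk) hx
    rw [hh, hh, h0p, hxp]
    nlinarith [this]
  · intro hτγ
    have haτ : a < τ := by
      rw [hτ]; nlinarith [mul_pos (mul_pos hw hp) hapos]
    have haγ : a ≤ γ := by linarith
    set f : ℝ → ℝ := fun x => x + w*p*x^(p-1) with hf_def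
    have hcont : ContinuousOn f (Set.Icc a γ) := by
      apply ContinuousOn.add continuousOn_id
      apply ContinuousOn.mul continuousOn_const
      apply ContinuousOn.rpow_const continuousOn_id
      intro x hx
      exact Or.inl (lt_of_lt_of_le ha hx.1).ne'
    have hfa : f a = τ := by rw [hf_def]; exact hτ.symm
    have hfγ : γ ≤ f γ := by
      have : 0 < w*p*γ^(p-1) := by positivity
      simp only [hf_def]
      linarith
    have hmem : γ ∈ Set.Icc (f a) (f γ) := ⟨by rw [hfa]; exact hτγ.le, hfγ⟩
    obtain ⟨x₀, hx₀mem, hx₀⟩ := intermediate_value_Icc haγ hcont hmem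
    have hx₀a : a ≤ x₀ := hx₀mem.1
    have hx₀pos : 0 < x₀ := lt_of_lt_of_le ha hx₀a
    have hx₀ne : x₀ ≠ a := by
      intro hE
      rw [hE, hfa] at hx₀
      exact absurd hx₀ (ne_of_lt hτγ)
    have hx₀a' : a < x₀ := lt_of_le_of_ne hx₀a (Ne.symm hx₀ne)
    have heq : x₀ + w*p*x₀^(p-1) = γ := hx₀
    refine ⟨x₀, hx₀pos, ?_, by linarith⟩
    have hpow : 2*w*(1-p) < x₀^(2-p) := by
      rw [← hap2]
      exact Real.rpow_lt_rpow ha.le hx₀a' hp2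
    have hmul : 2*w*(1-p) * x₀^(p-1) < x₀ := by
      have := mul_lt_mul_of_pos_right hpow (Real.rpow_pos_of_pos hx₀pos (p-1))
      have hid : x₀^(2-p) * x₀^(p-1) = x₀ := by
        rw [← Real.rpow_add hx₀pos]; norm_num
      rwa [hid] at this
    have hxp : x₀ ^ p = x₀^(p-1) * x₀ := by
      calc x₀ ^ p = x₀ ^ (p-1+1) := by norm_num
        _ = x₀^(p-1) * x₀^(1:ℝ) := Real.rpow_add hx₀pos _ _
        _ = x₀^(p-1) * x₀ := by rw [Real.rpow_one]
    rw [hh, hh, h0p, hxp]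
    set y := x₀^(p-1) with hy
    have e1 : 2*w*(1-p)*y*x₀ < x₀*x₀ := mul_lt_mul_of_pos_right hmul hx₀pos
    have e2 : (x₀ + w*p*y)*x₀ = γ*x₀ := by rw [heq]
    nlinarith [e1, e2]
end
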